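/- Let n >= 3 be an integer. Then D_n := 739*n^2 - 2717*n + 1960 > 0. Set omega_6 = 18*(5*n-2)/(n*D_n), omega_3 = 18*(91*n-4)/(n*D_n), omega_5 = -8*omega_6, omega_2 = -8*omega_3, omega_4 = 64*omega_6, omega_1 = 1 - n*(49*omega_6 - 7*omega_3). Let S be the (12n+1) x (6n+1) real matrix and L the (6n+1) x (12n+1) real matrix with the bordered block-circulant structure described in the context, and let A = L*S. Then there exists a row vector omega in R^{6n+1} whose entry at index 0 equals omega_1, whose six entries on each sector are (at the same within-sector positions for every sector) the values omega_2, omega_3, omega_4, omega_6 each once and omega_5 twice, and which satisfies omega * A = e_0 (the first standard basis row vector of R^{6n+1}). -/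

import Mathlib

open Matrix

noncomputable section

/-- Central block of the Catmull–Clark local subdivision matrix. -/
def ccS0 : Matrix (Fin 12) (Fin 6) ℝ :=
  (1/64 : ℝ) • !![24,0,4,0,0,0; 36,6,6,1,0,0; 24,24,4,4,0,0;
                  16,0,16,0,0,0; 24,4,24,4,0,0; 16,16,16,16,0,0;
                  4,0,24,0,4,0; 6,1,36,6,6,1; 4,4,24,24,4,4;
                  0,0,16,0,16,0; 0,0,24,4,24,4; 0,0,16,16,16,16]

/-- Block of the Catmull–Clark local subdivision matrix for sector `k + 1`. -/
def ccS1 : Matrix (Fin 12) (Fin 6) ℝ :=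
  (1/64 : ℝ) • !![4,0,0,0,0,0; 1,0,0,0,0,0; 0,0,0,0,0,0;
                  16,0,0,0,0,0; 4,0,0,0,0,0; 0,0,0,0,0,0;
                  24,4,0,0,0,0; 6,1,0,0,0,0; 0,0,0,0,0,0;
                  16,16,0,0,0,0; 4,4,0,0,0,0; 0,0,0,0,0,0]

/-- Block of the Catmull–Clark local subdivision matrix for sector `k - 1`. -/
def ccS2 : Matrix (Fin 12) (Fin 6) ℝ :=
  (1/64 : ℝ) • !![4,0,4,0,0,0; 1,0,6,0,1,0; 0,0,4,0,4,0;
                  0,0,0,0,0,0; 0,0,0,0,0,0; 0,0,0,0,0,0;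
                  0,0,0,0,0,0; 0,0,0,0,0,0; 0,0,0,0,0,0;
                  0,0,0,0,0,0; 0,0,0,0,0,0; 0,0,0,0,0,0]

/-- Column-0 entries of the sector rows of the Catmull–Clark subdivision
matrix. -/
def ccSCol0 : Fin 12 → ℝ := (1/64 : ℝ) • ![24,6,0,16,4,0,4,1,0,0,0,0]

/-- Row-0 entries on each column sector of the Catmull–Clark subdivision
matrix (before the `1/(4n²)` scaling). -/
def ccSRow0 : Fin 6 → ℝ := ![6,0,1,0,0,0]

/-- Central block of the Catmull–Clark position (limit-mask) matrix. -/
def ccL0 : Matrix (Fin 6) (Fin 12) ℝ :=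
  ((1/36 : ℝ) • (!![16,4,4,1,0,0; 4,16,1,4,0,0; 0,4,0,1,0,0;
                    4,1,16,4,4,1; 1,4,4,16,1,4; 0,1,0,4,0,1;
                    0,0,4,1,16,4; 0,0,1,4,4,16; 0,0,0,1,0,4;
                    0,0,0,0,4,1; 0,0,0,0,1,4; 0,0,0,0,0,1] :
    Matrix (Fin 12) (Fin 6) ℝ))ᵀ

/-- Block of the Catmull–Clark position matrix for sector `k + 1`. -/
def ccL1 : Matrix (Fin 6) (Fin 12) ℝ :=
  ((1/36 : ℝ) • (!![1,0,4,0,1,0; 0,0,1,0,4,0; 0,0,0,0,1,0;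
                    0,0,0,0,0,0; 0,0,0,0,0,0; 0,0,0,0,0,0;
                    0,0,0,0,0,0; 0,0,0,0,0,0; 0,0,0,0,0,0;
                    0,0,0,0,0,0; 0,0,0,0,0,0; 0,0,0,0,0,0] :
    Matrix (Fin 12) (Fin 6) ℝ))ᵀ

/-- Block of the Catmull–Clark position matrix for sector `k - 1`. -/
def ccL2 : Matrix (Fin 6) (Fin 12) ℝ :=
  ((1/36 : ℝ) • (!![1,0,0,0,0,0; 0,0,0,0,0,0; 0,0,0,0,0,0;
                    4,1,0,0,0,0; 0,0,0,0,0,0; 0,0,0,0,0,0;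
                    1,4,0,0,0,0; 0,0,0,0,0,0; 0,0,0,0,0,0;
                    0,1,0,0,0,0; 0,0,0,0,0,0; 0,0,0,0,0,0] :
    Matrix (Fin 12) (Fin 6) ℝ))ᵀ

/-- Column-0 entries of the sector rows of the Catmull–Clark position
matrix. -/
def ccLCol0 : Fin 6 → ℝ := (1/36 : ℝ) • ![4,0,1,0,0,0]

/-- Row-0 entries on each column sector of the Catmull–Clark position matrix
(before the `1/(n(n+5))` scaling). -/
def ccLRow0 : Fin 12 → ℝ := ![4,0,0,1,0,0,0,0,0,0,0,0]

/-- The `(12n+1) × (6n+1)` bordered block-circulant Catmull–Clark local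
subdivision matrix `S` at a vertex of valence `n`. Rows/columns are indexed by
a center index (`Sum.inl ()`) followed by `n` cyclic sectors of size `12`
(rows) resp. `6` (columns). -/
def ccSMat (n : ℕ) [NeZero n] :
    Matrix (Unit ⊕ ZMod n × Fin 12) (Unit ⊕ ZMod n × Fin 6) ℝ :=
  Matrix.of fun r c =>
    match r, c with
    | Sum.inl _, Sum.inl _ => 1 - 7 / (4 * (n : ℝ))
    | Sum.inl _, Sum.inr (_, j) => (1 / (4 * (n : ℝ)^2)) * ccSRow0 j
    | Sum.inr (_, i), Sum.inl _ => ccSCol0 i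
    | Sum.inr (k, i), Sum.inr (m, j) =>
        if m = k then ccS0 i j
        else if m = k + 1 then ccS1 i j
        else if m = k - 1 then ccS2 i j
        else 0

/-- The `(6n+1) × (12n+1)` bordered block-circulant Catmull–Clark position
(limit-mask) matrix `L` at a vertex of valence `n`. -/
def ccLMat (n : ℕ) [NeZero n] :
    Matrix (Unit ⊕ ZMod n × Fin 6) (Unit ⊕ ZMod n × Fin 12) ℝ :=
  Matrix.of fun r c =>
    match r, c with
    | Sum.inl _, Sum.inl _ => (n : ℝ) / ((n : ℝ) + 5)
    | Sum.inl _, Sum.inr (_, j) => (1 / ((n : ℝ) * ((n : ℝ) + 5))) * ccLRow0 j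
    | Sum.inr (_, i), Sum.inl _ => ccLCol0 i
    | Sum.inr (k, i), Sum.inr (m, j) =>
        if m = k then ccL0 i j
        else if m = k + 1 then ccL1 i j
        else if m = k - 1 then ccL2 i j
        else 0

@[simp] theorem ccVec6_0 {α : Type*} (a0 a1 a2 a3 a4 a5 : α) : ![a0, a1, a2, a3, a4, a5] 0 = a0 := rfl
@[simp] theorem ccVec6_1 {α : Type*} (a0 a1 a2 a3 a4 a5 : α) : ![a0, a1, a2, a3, a4, a5] 1 = a1 := rfl
@[simp] theorem ccVec6_2 {α : Type*} (a0 a1 a2 a3 a4 a5 : α) : ![a0, a1, a2, a3, a4, a5] 2 = a2 := rfl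
@[simp] theorem ccVec6_3 {α : Type*} (a0 a1 a2 a3 a4 a5 : α) : ![a0, a1, a2, a3, a4, a5] 3 = a3 := rfl
@[simp] theorem ccVec6_4 {α : Type*} (a0 a1 a2 a3 a4 a5 : α) : ![a0, a1, a2, a3, a4, a5] 4 = a4 := rfl
@[simp] theorem ccVec6_5 {α : Type*} (a0 a1 a2 a3 a4 a5 : α) : ![a0, a1, a2, a3, a4, a5] 5 = a5 := rfl
@[simp] theorem ccVec12_0 {α : Type*} (a0 a1 a2 a3 a4 a5 a6 a7 a8 a9 a10 a11 : α) : ![a0, a1, a2, a3, a4, a5, a6, a7, a8, a9, a10, a11] 0 = a0 := rfl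
@[simp] theorem ccVec12_1 {α : Type*} (a0 a1 a2 a3 a4 a5 a6 a7 a8 a9 a10 a11 : α) : ![a0, a1, a2, a3, a4, a5, a6, a7, a8, a9, a10, a11] 1 = a1 := rfl
@[simp] theorem ccVec12_2 {α : Type*} (a0 a1 a2 a3 a4 a5 a6 a7 a8 a9 a10 a11 : α) : ![a0, a1, a2, a3, a4, a5, a6, a7, a8, a9, a10, a11] 2 = a2 := rfl
@[simp] theorem ccVec12_3 {α : Type*} (a0 a1 a2 a3 a4 a5 a6 a7 a8 a9 a10 a11 : α) : ![a0, a1, a2, a3, a4, a5, a6, a7, a8, a9, a10, a11] 3 = a3 := rfl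
@[simp] theorem ccVec12_4 {α : Type*} (a0 a1 a2 a3 a4 a5 a6 a7 a8 a9 a10 a11 : α) : ![a0, a1, a2, a3, a4, a5, a6, a7, a8, a9, a10, a11] 4 = a4 := rfl
@[simp] theorem ccVec12_5 {α : Type*} (a0 a1 a2 a3 a4 a5 a6 a7 a8 a9 a10 a11 : α) : ![a0, a1, a2, a3, a4, a5, a6, a7, a8, a9, a10, a11] 5 = a5 := rfl
@[simp] theorem ccVec12_6 {α : Type*} (a0 a1 a2 a3 a4 a5 a6 a7 a8 a9 a10 a11 : α) : ![a0, a1, a2, a3, a4, a5, a6, a7, a8, a9, a10, a11] 6 = a6 := rfl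
@[simp] theorem ccVec12_7 {α : Type*} (a0 a1 a2 a3 a4 a5 a6 a7 a8 a9 a10 a11 : α) : ![a0, a1, a2, a3, a4, a5, a6, a7, a8, a9, a10, a11] 7 = a7 := rfl
@[simp] theorem ccVec12_8 {α : Type*} (a0 a1 a2 a3 a4 a5 a6 a7 a8 a9 a10 a11 : α) : ![a0, a1, a2, a3, a4, a5, a6, a7, a8, a9, a10, a11] 8 = a8 := rfl
@[simp] theorem ccVec12_9 {α : Type*} (a0 a1 a2 a3 a4 a5 a6 a7 a8 a9 a10 a11 : α) : ![a0, a1, a2, a3, a4, a5, a6, a7, a8, a9, a10, a11] 9 = a9 := rfl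
@[simp] theorem ccVec12_10 {α : Type*} (a0 a1 a2 a3 a4 a5 a6 a7 a8 a9 a10 a11 : α) : ![a0, a1, a2, a3, a4, a5, a6, a7, a8, a9, a10, a11] 10 = a10 := rfl
@[simp] theorem ccVec12_11 {α : Type*} (a0 a1 a2 a3 a4 a5 a6 a7 a8 a9 a10 a11 : α) : ![a0, a1, a2, a3, a4, a5, a6, a7, a8, a9, a10, a11] 11 = a11 := rfl

@[simp] theorem ccVec6mk_0 {α : Type*} (a0 a1 a2 a3 a4 a5 : α) (h : (0:ℕ) < 6) : ![a0, a1, a2, a3, a4, a5] ⟨0, h⟩ = a0 := rfl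
@[simp] theorem ccVec6mk_1 {α : Type*} (a0 a1 a2 a3 a4 a5 : α) (h : (1:ℕ) < 6) : ![a0, a1, a2, a3, a4, a5] ⟨1, h⟩ = a1 := rfl
@[simp] theorem ccVec6mk_2 {α : Type*} (a0 a1 a2 a3 a4 a5 : α) (h : (2:ℕ) < 6) : ![a0, a1, a2, a3, a4, a5] ⟨2, h⟩ = a2 := rfl
@[simp] theorem ccVec6mk_3 {α : Type*} (a0 a1 a2 a3 a4 a5 : α) (h : (3:ℕ) < 6) : ![a0, a1, a2, a3, a4, a5] ⟨3, h⟩ = a3 := rfl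
@[simp] theorem ccVec6mk_4 {α : Type*} (a0 a1 a2 a3 a4 a5 : α) (h : (4:ℕ) < 6) : ![a0, a1, a2, a3, a4, a5] ⟨4, h⟩ = a4 := rfl
@[simp] theorem ccVec6mk_5 {α : Type*} (a0 a1 a2 a3 a4 a5 : α) (h : (5:ℕ) < 6) : ![a0, a1, a2, a3, a4, a5] ⟨5, h⟩ = a5 := rfl
@[simp] theorem ccVec12mk_0 {α : Type*} (a0 a1 a2 a3 a4 a5 a6 a7 a8 a9 a10 a11 : α) (h : (0:ℕ) < 12) : ![a0, a1, a2, a3, a4, a5, a6, a7, a8, a9, a10, a11] ⟨0, h⟩ = a0 := rfl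
@[simp] theorem ccVec12mk_1 {α : Type*} (a0 a1 a2 a3 a4 a5 a6 a7 a8 a9 a10 a11 : α) (h : (1:ℕ) < 12) : ![a0, a1, a2, a3, a4, a5, a6, a7, a8, a9, a10, a11] ⟨1, h⟩ = a1 := rfl
@[simp] theorem ccVec12mk_2 {α : Type*} (a0 a1 a2 a3 a4 a5 a6 a7 a8 a9 a10 a11 : α) (h : (2:ℕ) < 12) : ![a0, a1, a2, a3, a4, a5, a6, a7, a8, a9, a10, a11] ⟨2, h⟩ = a2 := rfl
@[simp] theorem ccVec12mk_3 {α : Type*} (a0 a1 a2 a3 a4 a5 a6 a7 a8 a9 a10 a11 : α) (h : (3:ℕ) < 12) : ![a0, a1, a2, a3, a4, a5, a6, a7, a8, a9, a10, a11] ⟨3, h⟩ = a3 := rfl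
@[simp] theorem ccVec12mk_4 {α : Type*} (a0 a1 a2 a3 a4 a5 a6 a7 a8 a9 a10 a11 : α) (h : (4:ℕ) < 12) : ![a0, a1, a2, a3, a4, a5, a6, a7, a8, a9, a10, a11] ⟨4, h⟩ = a4 := rfl
@[simp] theorem ccVec12mk_5 {α : Type*} (a0 a1 a2 a3 a4 a5 a6 a7 a8 a9 a10 a11 : α) (h : (5:ℕ) < 12) : ![a0, a1, a2, a3, a4, a5, a6, a7, a8, a9, a10, a11] ⟨5, h⟩ = a5 := rfl
@[simp] theorem ccVec12mk_6 {α : Type*} (a0 a1 a2 a3 a4 a5 a6 a7 a8 a9 a10 a11 : α) (h : (6:ℕ) < 12) : ![a0, a1, a2, a3, a4, a5, a6, a7, a8, a9, a10, a11] ⟨6, h⟩ = a6 := rfl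
@[simp] theorem ccVec12mk_7 {α : Type*} (a0 a1 a2 a3 a4 a5 a6 a7 a8 a9 a10 a11 : α) (h : (7:ℕ) < 12) : ![a0, a1, a2, a3, a4, a5, a6, a7, a8, a9, a10, a11] ⟨7, h⟩ = a7 := rfl
@[simp] theorem ccVec12mk_8 {α : Type*} (a0 a1 a2 a3 a4 a5 a6 a7 a8 a9 a10 a11 : α) (h : (8:ℕ) < 12) : ![a0, a1, a2, a3, a4, a5, a6, a7, a8, a9, a10, a11] ⟨8, h⟩ = a8 := rfl
@[simp] theorem ccVec12mk_9 {α : Type*} (a0 a1 a2 a3 a4 a5 a6 a7 a8 a9 a10 a11 : α) (h : (9:ℕ) < 12) : ![a0, a1, a2, a3, a4, a5, a6, a7, a8, a9, a10, a11] ⟨9, h⟩ = a9 := rfl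
@[simp] theorem ccVec12mk_10 {α : Type*} (a0 a1 a2 a3 a4 a5 a6 a7 a8 a9 a10 a11 : α) (h : (10:ℕ) < 12) : ![a0, a1, a2, a3, a4, a5, a6, a7, a8, a9, a10, a11] ⟨10, h⟩ = a10 := rfl
@[simp] theorem ccVec12mk_11 {α : Type*} (a0 a1 a2 a3 a4 a5 a6 a7 a8 a9 a10 a11 : α) (h : (11:ℕ) < 12) : ![a0, a1, a2, a3, a4, a5, a6, a7, a8, a9, a10, a11] ⟨11, h⟩ = a11 := rfl

set_option maxHeartbeats 1000000

/-- For any valence `n ≥ 3`, `Dₙ = 739n² - 2717n + 1960 > 0`, and the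
Catmull–Clark quasi-interpolation weight vector `ω` — with center entry `ω₁`
and sector entries `ω₂, ω₃, ω₄, ω₆` each once and `ω₅` twice (at the same
within-sector positions for every sector) — satisfies `ω * A = e₀` with
`A = L * S`. -/
theorem catmull_clark_quasi_interpolation_weights
    (n : ℕ) [NeZero n] (hn : 3 ≤ n)
    (D ω₁ ω₂ ω₃ ω₄ ω₅ ω₆ : ℝ)
    (hD : D = 739 * n^2 - 2717 * n + 1960)
    (hω₆ : ω₆ = 18 * (5 * n - 2) / (n * D))
    (hω₃ : ω₃ = 18 * (91 * n - 4) / (n * D))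
    (hω₅ : ω₅ = -8 * ω₆) (hω₂ : ω₂ = -8 * ω₃) (hω₄ : ω₄ = 64 * ω₆)
    (hω₁ : ω₁ = 1 - n * (49 * ω₆ - 7 * ω₃)) :
    0 < D ∧
    ∃ ω : (Unit ⊕ ZMod n × Fin 6) → ℝ, ∃ w : Fin 6 → ℝ,
      ω (Sum.inl ()) = ω₁ ∧
      (∀ (k : ZMod n) (j : Fin 6), ω (Sum.inr (k, j)) = w j) ∧
      ({w 0, w 1, w 2, w 3, w 4, w 5} : Multiset ℝ)
        = {ω₂, ω₃, ω₄, ω₆, ω₅, ω₅} ∧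
      ω ᵥ* (ccLMat n * ccSMat n) = Pi.single (Sum.inl ()) 1 := by
  have hnn : (3:ℝ) ≤ (n:ℝ) := by exact_mod_cast hn
  have hn0 : (n:ℝ) ≠ 0 := by linarith
  have hDpos : 0 < D := by rw [hD]; nlinarith
  have hD0 : D ≠ 0 := ne_of_gt hDpos
  have hn5 : (n:ℝ) + 5 ≠ 0 := by linarith
  refine ⟨hDpos, ?_⟩
  have one_ne : (1 : ZMod n) ≠ 0 := by
    simpa using
      (show ((1 : ℕ) : ZMod n) ≠ 0 by
        rw [Ne, ZMod.natCast_eq_zero_iff]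
        exact fun h => by have := Nat.le_of_dvd one_pos h; omega)
  have two_ne : (2 : ZMod n) ≠ 0 := by
    simpa using
      (show ((2 : ℕ) : ZMod n) ≠ 0 by
        rw [Ne, ZMod.natCast_eq_zero_iff]
        exact fun h => by have := Nat.le_of_dvd two_pos h; omega)
  have key : ∀ (m : ZMod n) (a b c : ℝ),
      (∑ k : ZMod n, if m = k then a else if m = k + 1 then b else if m = k - 1 then c else 0)
        = a + b + c := by
    intro m a b c
    have hm1 : m ≠ m - 1 := fun h => one_ne (by
      rw [show (1:ZMod n) = m - (m-1) by ring, ← h, sub_self])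
    have hm2 : m ≠ m + 1 := fun h => one_ne (by
      rw [show (1:ZMod n) = (m+1) - m by ring, ← h, sub_self])
    have hm3 : m - 1 ≠ m + 1 := fun h => two_ne (by
      rw [show (2:ZMod n) = (m+1) - (m-1) by ring, ← h, sub_self])
    have hm4 : m ≠ m + 1 + 1 := fun h => two_ne (by
      rw [show (2:ZMod n) = (m+1+1) - m by ring, ← h, sub_self])
    have hpt : ∀ k : ZMod n,
        (if m = k then a else if m = k + 1 then b else if m = k - 1 then c else 0)
          = (if k = m then a else 0) + (if k = m - 1 then b else 0)
            + (if k = m + 1 then c else 0) := by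
      intro k
      rcases eq_or_ne k m with rfl | h0
      · simp [hm1, hm2]
      rcases eq_or_ne k (m - 1) with rfl | h1
      · simp [hm1, hm1.symm, hm3, sub_add_cancel]
      rcases eq_or_ne k (m + 1) with rfl | h2
      · simp [hm2, hm2.symm, hm3.symm, hm4, add_sub_cancel_right]
      · have e1 : m ≠ k + 1 := fun h => h1 (by rw [h]; ring)
        have e2 : m ≠ k - 1 := fun h => h2 (by rw [h]; ring)
        simp [Ne.symm h0, e1, e2, h0, h1, h2]
    rw [Finset.sum_congr rfl fun k _ => hpt k]
    simp [Finset.sum_add_distrib, Finset.sum_ite_eq']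
  refine ⟨Sum.elim (fun _ => ω₁) (fun p : ZMod n × Fin 6 => ![ω₂, ω₃, ω₄, ω₅, ω₅, ω₆] p.2),
    ![ω₂, ω₃, ω₄, ω₅, ω₅, ω₆], rfl, fun k j => rfl, ?_, ?_⟩
  · show (ω₂ ::ₘ ω₃ ::ₘ ω₄ ::ₘ ω₅ ::ₘ ω₅ ::ₘ {ω₆} : Multiset ℝ) = _
    rw [show ({ω₆} : Multiset ℝ) = ω₆ ::ₘ 0 from rfl,
      show ({ω₅} : Multiset ℝ) = ω₅ ::ₘ 0 from rfl,
      Multiset.cons_swap ω₅ ω₆, Multiset.cons_swap ω₅ ω₆]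
    rfl
  · have hL : (Sum.elim (fun _ => ω₁) (fun p : ZMod n × Fin 6 => ![ω₂, ω₃, ω₄, ω₅, ω₅, ω₆] p.2))
        ᵥ* ccLMat n
        = Sum.elim (fun _ => ω₁ * ((n:ℝ) / ((n:ℝ)+5)) + (n:ℝ) * ((4*ω₂+ω₄)/36))
            (fun p : ZMod n × Fin 12 =>
              ![ω₁ * (4 / ((n:ℝ) * ((n:ℝ)+5))) + (18*ω₂ + 4*ω₃ + 8*ω₄ + 2*ω₅)/36,
                (4*ω₂ + 16*ω₃ + 2*ω₄ + 8*ω₅)/36,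
                (4*ω₃ + 2*ω₅)/36,
                ω₁ * (1 / ((n:ℝ) * ((n:ℝ)+5))) + (8*ω₂ + 2*ω₃ + 16*ω₄ + 8*ω₅ + ω₆)/36,
                (ω₂ + 4*ω₃ + 4*ω₄ + 17*ω₅ + 4*ω₆)/36,
                (ω₃ + 4*ω₅ + ω₆)/36,
                (ω₂ + 4*ω₃ + 4*ω₄ + 17*ω₅ + 4*ω₆)/36,
                (ω₄ + 8*ω₅ + 16*ω₆)/36,
                (ω₅ + 4*ω₆)/36,
                (ω₃ + 4*ω₅ + ω₆)/36,
                (ω₅ + 4*ω₆)/36,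
                ω₆/36] p.2) := by
      funext c
      cases c with
      | inl _ =>
        simp only [Matrix.vecMul, dotProduct, Fintype.sum_sum_type,
          Fintype.sum_prod_type, Sum.elim_inl, Sum.elim_inr, ccLMat, Matrix.of_apply,
          Finset.univ_unique, Finset.sum_singleton, Finset.sum_const, Finset.card_univ,
          ZMod.card, nsmul_eq_mul, Finset.card_singleton, Nat.cast_one, one_mul]
        simp only [ccLCol0, Fin.sum_univ_succ, Fin.sum_univ_zero, Pi.smul_apply,
          smul_eq_mul, Matrix.cons_val_zero, Matrix.cons_val_succ, add_zero]
        ring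
      | inr p =>
        obtain ⟨m, j⟩ := p
        simp only [Matrix.vecMul, dotProduct, Fintype.sum_sum_type,
          Fintype.sum_prod_type, Sum.elim_inl, Sum.elim_inr, ccLMat, Matrix.of_apply,
          Finset.univ_unique, Finset.sum_singleton]
        rw [Finset.sum_comm]
        rw [Finset.sum_congr rfl fun i _ => by rw [← Finset.mul_sum, key m]]
        fin_cases j <;>
        · simp only [ccLRow0, ccL0, ccL1, ccL2, Matrix.transpose_apply, Matrix.smul_apply,
            Matrix.of_apply, Pi.smul_apply, smul_eq_mul, Fin.sum_univ_succ, Fin.sum_univ_zero,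
            add_zero, Matrix.cons_val_zero, Matrix.cons_val_succ,
            ccVec6_0, ccVec6_1, ccVec6_2, ccVec6_3, ccVec6_4, ccVec6_5, ccVec6mk_0, ccVec6mk_1, ccVec6mk_2, ccVec6mk_3, ccVec6mk_4, ccVec6mk_5, ccVec12_0, ccVec12_1, ccVec12_2, ccVec12_3, ccVec12_4, ccVec12_5, ccVec12_6, ccVec12_7, ccVec12_8, ccVec12_9, ccVec12_10, ccVec12_11, ccVec12mk_0, ccVec12mk_1, ccVec12mk_2, ccVec12mk_3, ccVec12mk_4, ccVec12mk_5, ccVec12mk_6, ccVec12mk_7, ccVec12mk_8, ccVec12mk_9, ccVec12mk_10, ccVec12mk_11]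
          try field_simp
          try ring
    rw [← Matrix.vecMul_vecMul, hL]
    funext c
    cases c with
    | inl _ =>
      simp only [Matrix.vecMul, dotProduct, Fintype.sum_sum_type,
        Fintype.sum_prod_type, Sum.elim_inl, Sum.elim_inr, ccSMat, Matrix.of_apply,
        Finset.univ_unique, Finset.sum_singleton, Finset.sum_const, Finset.card_univ,
        ZMod.card, nsmul_eq_mul, Finset.card_singleton, Nat.cast_one, one_mul,
        Pi.single_eq_same]
      simp only [ccSCol0, Fin.sum_univ_succ, Fin.sum_univ_zero, Pi.smul_apply,
        smul_eq_mul, Matrix.cons_val_zero, Matrix.cons_val_succ, add_zero]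
      subst hω₁ hω₂ hω₄ hω₅
      ring_nf
      try (subst hω₃ hω₆; field_simp; subst hD; try ring)
    | inr p =>
      obtain ⟨m, j⟩ := p
      simp only [Matrix.vecMul, dotProduct, Fintype.sum_sum_type,
        Fintype.sum_prod_type, Sum.elim_inl, Sum.elim_inr, ccSMat, Matrix.of_apply,
        Finset.univ_unique, Finset.sum_singleton]
      rw [Finset.sum_comm]
      rw [Finset.sum_congr rfl fun i _ => by rw [← Finset.mul_sum, key m]]
      rw [show (Pi.single (Sum.inl ()) 1 : (Unit ⊕ ZMod n × Fin 6) → ℝ) (Sum.inr (m, j)) = 0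
        from Pi.single_eq_of_ne (by simp) 1]
      simp only [ccSRow0, ccS0, ccS1, ccS2, Matrix.smul_apply, Matrix.of_apply,
        Pi.smul_apply, smul_eq_mul, Fin.sum_univ_succ, Fin.sum_univ_zero, add_zero,
        Matrix.cons_val_zero, Matrix.cons_val_succ]
      fin_cases j <;>
      · simp only [ccVec6mk_0, ccVec6mk_1, ccVec6mk_2, ccVec6mk_3, ccVec6mk_4, ccVec6mk_5]
        subst hω₁ hω₂ hω₄ hω₅
        ring_nf
        try (subst hω₃ hω₆; field_simp; subst hD; try ring)

end
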